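/- The hyperbolicity cones of successive directional derivatives of a hyperbolic polynomial are nested: C(d) ⊆ C'(d) ⊆ C''(d) ⊆ ... ⊆ C^{(m−1)}(d), where C^{(k)}(d) is the hyperbolicity cone of the k-th derivative polynomial p^{(k)} with respect to d. -/

import Mathlib

open Polynomial

/-- Iterated (real) derivative of a polynomial evaluation map. -/
lemma polyIteratedDeriv (q : Polynomial ℝ) (n : ℕ) :
    iteratedDeriv n (fun x : ℝ => q.eval x) = fun x => (Polynomial.derivative^[n] q).eval x := by
  induction n with
  | zero => simp
  | succ n ih =>
    rw [iteratedDeriv_succ, ih, Function.iterate_succ_apply']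
    funext x
    exact Polynomial.deriv _

/-- Rolle-type count for iterated derivatives. -/
lemma card_roots_le_iterate (q : Polynomial ℝ) (j : ℕ) :
    Multiset.card q.roots ≤ Multiset.card (Polynomial.derivative^[j] q).roots + j := by
  induction j generalizing q with
  | zero => simp
  | succ j ih =>
    calc Multiset.card q.roots ≤ Multiset.card (Polynomial.derivative q).roots + 1 :=
          Polynomial.card_roots_le_derivative q
      _ ≤ (Multiset.card (Polynomial.derivative^[j] (Polynomial.derivative q)).roots + j) + 1 :=
          by exact Nat.add_le_add_right (ih _) 1
      _ = Multiset.card (Polynomial.derivative^[j + 1] q).roots + (j + 1) := by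
          rw [Function.iterate_succ_apply]; ring

/-- Positivity for products `∏ (X - r)` with all `r < 0`, and their derivatives, on `[0,∞)`. -/
lemma prod_deriv_pos (t : ℝ) (ht : 0 ≤ t) (s : Multiset ℝ) (hs : ∀ r ∈ s, r < 0) :
    0 < ((s.map fun r => X - C r).prod.eval t) ∧
      0 ≤ ((Polynomial.derivative (s.map fun r => X - C r).prod).eval t) ∧
      (s ≠ 0 → 0 < ((Polynomial.derivative (s.map fun r => X - C r).prod).eval t)) := by
  induction s using Multiset.induction_on with
  | empty => simp
  | cons a s ih =>
    have ha : a < 0 := hs a (Multiset.mem_cons_self a s)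
    obtain ⟨h1, h2, _⟩ := ih fun r hr => hs r (Multiset.mem_cons_of_mem hr)
    have hta : 0 < t - a := by linarith
    rw [Multiset.map_cons, Multiset.prod_cons]
    have hd : Polynomial.derivative ((X - C a) * (s.map fun r => X - C r).prod)
        = (s.map fun r => X - C r).prod
          + (X - C a) * Polynomial.derivative (s.map fun r => X - C r).prod := by
      rw [Polynomial.derivative_mul]
      simp
    constructor
    · simp only [Polynomial.eval_mul, Polynomial.eval_sub, Polynomial.eval_X, Polynomial.eval_C]
      positivity
    · rw [hd]
      simp only [Polynomial.eval_add, Polynomial.eval_mul, Polynomial.eval_sub,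
        Polynomial.eval_X, Polynomial.eval_C]
      constructor
      · nlinarith
      · intro _
        nlinarith

/-- The hyperbolicity cones of successive directional derivatives of a
hyperbolic polynomial are nested: `C(d) = C^{(0)}(d) ⊆ C^{(1)}(d) ⊆ ⋯ ⊆ C^{(m−1)}(d)`,
where `C^{(k)}(d)` is the hyperbolicity cone of `p^{(k)}(x) = (d^k/dt^k) p(x + t•d)|_{t=0}`. -/
theorem derivative_cones_nested {X : Type*} [AddCommGroup X] [Module ℝ X]
    (m : ℕ) (p : X → ℝ) (d : X)
    (hhom : ∀ (c : ℝ) (x : X), p (c • x) = c ^ m * p x)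
    (hpd : 0 < p d)
    (lam : X → Fin m → ℝ)
    (hmono : ∀ x, Monotone (lam x))
    (hroots : ∀ (x : X) (t : ℝ), p (x + t • d) = p d * ∏ i, (t + lam x i)) :
    ∀ k : ℕ, k + 2 ≤ m →
      {x : X | ∀ t : ℝ, 0 ≤ t →
          iteratedDeriv k (fun s : ℝ => p ((x + t • d) + s • d)) 0 ≠ 0}
        ⊆ {x : X | ∀ t : ℝ, 0 ≤ t →
            iteratedDeriv (k + 1) (fun s : ℝ => p ((x + t • d) + s • d)) 0 ≠ 0} := by
  intro k hk x hx
  -- the univariate polynomial F(u) = p(x + u d)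
  set P : Polynomial ℝ := C (p d) * ∏ i : Fin m, (Polynomial.X - C (-(lam x i))) with hP
  have hPeval : ∀ u : ℝ, P.eval u = p (x + u • d) := by
    intro u
    rw [hroots x u, hP]
    simp [Polynomial.eval_prod, sub_neg_eq_add]
  have hpdne : p d ≠ 0 := ne_of_gt hpd
  -- translation: iterated derivatives of the shifted map are evals of iterated derivatives of P
  have key : ∀ (n : ℕ) (t : ℝ),
      iteratedDeriv n (fun s : ℝ => p ((x + t • d) + s • d)) 0
        = (Polynomial.derivative^[n] P).eval t := by
    intro n t
    have hfun : (fun s : ℝ => p ((x + t • d) + s • d)) = fun s => P.eval (t + s) := by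
      funext s
      rw [hPeval (t + s), add_smul, add_assoc]
    rw [hfun, iteratedDeriv_comp_const_add n (fun u : ℝ => P.eval u) t, polyIteratedDeriv]
    simp
  -- degree and roots of P
  have hprodne : (∏ i : Fin m, (Polynomial.X - C (-(lam x i))) : Polynomial ℝ) ≠ 0 := by
    apply Finset.prod_ne_zero_iff.2
    intro i _
    exact Polynomial.X_sub_C_ne_zero _
  have hPdeg : P.natDegree = m := by
    rw [hP, Polynomial.natDegree_C_mul hpdne, Polynomial.natDegree_prod _ _
      (fun i _ => Polynomial.X_sub_C_ne_zero _)]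
    simp
  have hProots : Multiset.card P.roots = m := by
    have hr2 : ∀ c : ℝ, (Polynomial.X + C c : Polynomial ℝ).roots = {-c} := by
      intro c
      rw [show (Polynomial.X + C c : Polynomial ℝ) = Polynomial.X - C (-c) by simp [sub_neg_eq_add],
        Polynomial.roots_X_sub_C]
    rw [hP, Polynomial.roots_C_mul _ hpdne, Polynomial.roots_prod _ _ hprodne]
    simp [hr2]
  -- the k-th derivative polynomial
  set Q : Polynomial ℝ := Polynomial.derivative^[k] P with hQ
  have hQdeg_le : Q.natDegree ≤ m - k := by
    rw [hQ, ← hPdeg]; exact Polynomial.natDegree_iterate_derivative P k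
  have hQcard_ge : m - k ≤ Multiset.card Q.roots := by
    have h := card_roots_le_iterate P k
    rw [hProots, ← hQ] at h
    omega
  have hQcard : Multiset.card Q.roots = Q.natDegree := by
    have := Polynomial.card_roots' Q
    omega
  have hQcard' : Multiset.card Q.roots = m - k := by
    have := Polynomial.card_roots' Q
    omega
  have hQrootsne : Q.roots ≠ 0 := by
    intro h
    rw [h] at hQcard'
    simp at hQcard'
    omega
  have hQne : Q ≠ 0 := by
    intro h
    rw [h] at hQcard'
    simp at hQcard'
    omega
  -- Q is nonvanishing on [0, ∞), so all its roots are negative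
  have hQpos : ∀ t : ℝ, 0 ≤ t → Q.eval t ≠ 0 := by
    intro t ht
    have := hx t ht
    rwa [key k t] at this
  have hQrootsneg : ∀ r ∈ Q.roots, r < 0 := by
    intro r hr
    by_contra h
    push_neg at h
    exact hQpos r h ((Polynomial.mem_roots hQne).1 hr)
  -- factor Q over its roots
  have hfac : C Q.leadingCoeff * (Q.roots.map fun a => Polynomial.X - C a).prod = Q :=
    Polynomial.C_leadingCoeff_mul_prod_multiset_X_sub_C hQcard
  -- conclude
  intro t ht
  rw [Set.mem_setOf_eq] at *
  rw [key (k + 1) t, Function.iterate_succ_apply', ← hQ]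
  rw [← hfac, Polynomial.derivative_mul, Polynomial.derivative_C, zero_mul, zero_add]
  obtain ⟨_, _, h3⟩ := prod_deriv_pos t ht Q.roots hQrootsneg
  have hlc : Q.leadingCoeff ≠ 0 := Polynomial.leadingCoeff_ne_zero.2 hQne
  have := h3 hQrootsne
  simp only [Polynomial.eval_mul, Polynomial.eval_C]
  exact mul_ne_zero hlc (ne_of_gt this)
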